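/- Let X_1, ..., X_n be i.i.d. random variables taking values in a separable Hilbert space, and suppose there exists R > 0 such that |X_i − E[X_i]| ≤ R almost surely. Then for any δ > 0: P( (1/n) | Σ_{i=1}^n (X_i − E[X_i]) | ≥ δ ) ≤ 2 exp(−nδ²/(2R²)). -/

import Mathlib

open MeasureTheory

noncomputable section

section AuxProof
open Real

lemma aux_sinh_div_mono {x y : ℝ} (hx : 0 < x) (hxy : x ≤ y) :
    Real.sinh x / x ≤ Real.sinh y / y := by
  have hy : 0 < y := hx.trans_le hxy
  rw [div_le_div_iff₀ hx hy]
  refine hasSum_le (fun n => ?_) (x.hasSum_sinh.mul_right y) (y.hasSum_sinh.mul_right x)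
  rw [div_mul_eq_mul_div, div_mul_eq_mul_div]
  apply div_le_div_of_nonneg_right ?_ (by positivity)
  calc x ^ (2*n+1) * y = x ^ (2*n) * (x * y) := by ring
    _ ≤ y ^ (2*n) * (x * y) :=
        mul_le_mul_of_nonneg_right (pow_le_pow_left₀ hx.le hxy _) (by positivity)
    _ = y ^ (2*n+1) * x := by ring

lemma aux_convexOn_cosh_sqrt : ConvexOn ℝ (Set.Ici 0) (fun u => Real.cosh (Real.sqrt u)) := by
  have hder : ∀ u : ℝ, 0 < u → HasDerivAt (fun u => Real.cosh (Real.sqrt u))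
      (Real.sinh (Real.sqrt u) * (1 / (2 * Real.sqrt u))) u := by
    intro u hu
    exact (Real.hasDerivAt_cosh (Real.sqrt u)).comp u (Real.hasDerivAt_sqrt hu.ne')
  refine MonotoneOn.convexOn_of_deriv (convex_Ici 0)
    ((Real.continuous_cosh.comp Real.continuous_sqrt).continuousOn) ?_ ?_
  · rw [interior_Ici]
    exact fun u hu => ((hder u hu).differentiableAt).differentiableWithinAt
  · rw [interior_Ici]
    intro a ha b hb hab
    rw [(hder a ha).deriv, (hder b hb).deriv]
    have hsa : 0 < Real.sqrt a := Real.sqrt_pos.2 ha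
    have hsb : 0 < Real.sqrt b := Real.sqrt_pos.2 hb
    have := aux_sinh_div_mono hsa (Real.sqrt_le_sqrt hab)
    rw [mul_one_div, mul_one_div] at *
    calc Real.sinh (Real.sqrt a) / (2 * Real.sqrt a)
        = (Real.sinh (Real.sqrt a) / Real.sqrt a) / 2 := by ring
      _ ≤ (Real.sinh (Real.sqrt b) / Real.sqrt b) / 2 := by linarith
      _ = Real.sinh (Real.sqrt b) / (2 * Real.sqrt b) := by ring
section

variable {F : Type*} [NormedAddCommGroup F] [InnerProductSpace ℝ F] [CompleteSpace F]
  [MeasurableSpace F] [BorelSpace F]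


lemma aux_step (ν : Measure F) [IsProbabilityMeasure ν] {R lam : ℝ} (hR : 0 < R)
    (hlam : 0 ≤ lam) (hid : Integrable id ν) (h0 : (∫ y, y ∂ν) = 0)
    (hbd : ∀ᵐ y ∂ν, ‖y‖ ≤ R) (x : F) :
    ∫ y, Real.cosh (lam * ‖x + y‖) ∂ν ≤ Real.cosh (lam * ‖x‖) * Real.cosh (lam * R) := by
  set t : ℝ := ‖x‖ with ht
  have ht0 : 0 ≤ t := norm_nonneg x
  have hcont : Continuous fun y : F => Real.cosh (lam * ‖x + y‖) := by fun_prop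
  have hint1 : Integrable (fun y => Real.cosh (lam * ‖x + y‖)) ν := by
    refine Integrable.mono' (integrable_const (Real.cosh (lam * (t + R))))
      hcont.aestronglyMeasurable ?_
    filter_upwards [hbd] with y hy
    rw [Real.norm_eq_abs, abs_of_nonneg (Real.cosh_pos _).le, Real.cosh_le_cosh,
      abs_of_nonneg (by positivity), abs_of_nonneg (by positivity)]
    have : ‖x + y‖ ≤ t + R := (norm_add_le _ _).trans (by gcongr)
    nlinarith
  rcases eq_or_lt_of_le ht0 with h0t | h0t
  · -- x = 0
    have hx0 : x = 0 := by rw [← norm_eq_zero, ← ht, ← h0t]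
    calc ∫ y, Real.cosh (lam * ‖x + y‖) ∂ν ≤ ∫ _, Real.cosh (lam * R) ∂ν := by
          refine integral_mono_ae hint1 (integrable_const _) ?_
          filter_upwards [hbd] with y hy
          rw [hx0, zero_add, Real.cosh_le_cosh, abs_of_nonneg (by positivity),
            abs_of_nonneg (by positivity)]
          exact mul_le_mul_of_nonneg_left hy hlam
      _ = Real.cosh (lam * R) := by simp
      _ = Real.cosh (lam * t) * Real.cosh (lam * R) := by
          rw [← h0t, mul_zero, Real.cosh_zero, one_mul]
  · -- t > 0
    set e1 : ℝ := Real.cosh (lam * (t - R)) with he1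
    set e2 : ℝ := Real.cosh (lam * (t + R)) with he2
    set L : F → ℝ := fun y =>
      (e1 + e2) / 2 + (inner ℝ x y) * ((e2 - e1) / (2 * t * R)) with hL
    have hinner_int : Integrable (fun y => (inner ℝ x y)) ν := by
      refine Integrable.mono' (integrable_const (t * R))
        (Continuous.aestronglyMeasurable (continuous_const.inner continuous_id)) ?_
      filter_upwards [hbd] with y hy
      rw [Real.norm_eq_abs]
      exact (abs_real_inner_le_norm x y).trans (by gcongr)
    have hLint : Integrable L ν := by
      exact (integrable_const _).add (hinner_int.mul_const _)
    have hLval : (∫ y, L y ∂ν) = (e1 + e2) / 2 := by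
      simp only [hL]
      rw [integral_add (integrable_const _) (hinner_int.mul_const _),
        integral_const, integral_mul_const]
      have : (∫ y, (inner ℝ x y) ∂ν) = (inner ℝ x (∫ y, y ∂ν)) := integral_inner hid x
      rw [this, h0, inner_zero_right]
      simp
    have hptwise : ∀ᵐ y ∂ν, Real.cosh (lam * ‖x + y‖) ≤ L y := by
      filter_upwards [hbd] with y hy
      set c : ℝ := (inner ℝ x y) with hc
      have hcabs : |c| ≤ t * R := (abs_real_inner_le_norm x y).trans (by gcongr)
      have h1 : Real.cosh (lam * ‖x + y‖) = Real.cosh (Real.sqrt (lam ^ 2 * ‖x + y‖ ^ 2)) := by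
        rw [show lam ^ 2 * ‖x + y‖ ^ 2 = (lam * ‖x + y‖) ^ 2 by ring,
          Real.sqrt_sq (by positivity)]
      have hnorm : ‖x + y‖ ^ 2 = t ^ 2 + 2 * c + ‖y‖ ^ 2 := by
        rw [hc, @norm_add_sq_real]
      have hmono : Real.cosh (Real.sqrt (lam ^ 2 * ‖x + y‖ ^ 2)) ≤
          Real.cosh (Real.sqrt (lam ^ 2 * (t ^ 2 + 2 * c + R ^ 2))) := by
        rw [Real.cosh_le_cosh, abs_of_nonneg (Real.sqrt_nonneg _),
          abs_of_nonneg (Real.sqrt_nonneg _)]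
        apply Real.sqrt_le_sqrt
        have : ‖y‖ ^ 2 ≤ R ^ 2 := by nlinarith [norm_nonneg y]
        nlinarith [sq_nonneg lam]
      -- convexity chord
      set a1 : ℝ := (t * R - c) / (2 * t * R) with ha1
      set a2 : ℝ := (t * R + c) / (2 * t * R) with ha2
      have htR : 0 < 2 * t * R := by positivity
      have ha1pos : 0 ≤ a1 := by
        apply div_nonneg _ htR.le
        have := abs_le.1 hcabs; linarith
      have ha2pos : 0 ≤ a2 := by
        apply div_nonneg _ htR.le
        have := abs_le.1 hcabs; linarith
      have hsum : a1 + a2 = 1 := by rw [ha1, ha2]; field_simp; ring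
      have hcomb : a1 * (lam ^ 2 * (t - R) ^ 2) + a2 * (lam ^ 2 * (t + R) ^ 2)
          = lam ^ 2 * (t ^ 2 + 2 * c + R ^ 2) := by
        rw [ha1, ha2]
        field_simp
        ring
      have hconv := aux_convexOn_cosh_sqrt.2 (Set.mem_Ici.2 (by positivity : (0:ℝ) ≤ lam ^ 2 * (t - R) ^ 2))
        (Set.mem_Ici.2 (by positivity : (0:ℝ) ≤ lam ^ 2 * (t + R) ^ 2)) ha1pos ha2pos hsum
      simp only [smul_eq_mul] at hconv
      rw [hcomb] at hconv
      have hv1 : Real.cosh (Real.sqrt (lam ^ 2 * (t - R) ^ 2)) = e1 := by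
        rw [show lam ^ 2 * (t - R) ^ 2 = (lam * (t - R)) ^ 2 by ring, Real.sqrt_sq_eq_abs,
          Real.cosh_abs, he1]
      have hv2 : Real.cosh (Real.sqrt (lam ^ 2 * (t + R) ^ 2)) = e2 := by
        rw [show lam ^ 2 * (t + R) ^ 2 = (lam * (t + R)) ^ 2 by ring, Real.sqrt_sq_eq_abs,
          Real.cosh_abs, he2]
      rw [hv1, hv2] at hconv
      have hLeq : L y = a1 * e1 + a2 * e2 := by
        simp only [hL, ha1, ha2, ← hc]
        field_simp
        ring
      rw [h1, hLeq]
      exact hmono.trans hconv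
    calc ∫ y, Real.cosh (lam * ‖x + y‖) ∂ν ≤ ∫ y, L y ∂ν :=
          integral_mono_ae hint1 hLint hptwise
      _ = (e1 + e2) / 2 := hLval
      _ = Real.cosh (lam * t) * Real.cosh (lam * R) := by
          rw [he1, he2, show lam * (t - R) = lam * t - lam * R by ring,
            show lam * (t + R) = lam * t + lam * R by ring, Real.cosh_sub, Real.cosh_add]
          ring
end
section

variable {F : Type*} [NormedAddCommGroup F] [InnerProductSpace ℝ F] [CompleteSpace F]
  [SecondCountableTopology F] [MeasurableSpace F] [BorelSpace F]


lemma aux_step_rv {Θ : Type*} [MeasurableSpace Θ] (μ : Measure Θ) [IsProbabilityMeasure μ]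
    {W Y : Θ → F} (hW : Measurable W) (hY : Measurable Y)
    (hindep : ProbabilityTheory.IndepFun W Y μ)
    {R B lam : ℝ} (hR : 0 < R) (hB : 0 ≤ B) (hlam : 0 ≤ lam)
    (hYint : Integrable Y μ) (hY0 : (∫ θ, Y θ ∂μ) = 0)
    (hYbd : ∀ᵐ θ ∂μ, ‖Y θ‖ ≤ R) (hWbd : ∀ᵐ θ ∂μ, ‖W θ‖ ≤ B) :
    ∫ θ, Real.cosh (lam * ‖W θ + Y θ‖) ∂μ ≤
      (∫ θ, Real.cosh (lam * ‖W θ‖) ∂μ) * Real.cosh (lam * R) := by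
  have hWY : AEMeasurable (fun θ => (W θ, Y θ)) μ := (hW.prodMk hY).aemeasurable
  have hmap : μ.map (fun θ => (W θ, Y θ)) = (μ.map W).prod (μ.map Y) :=
    (ProbabilityTheory.indepFun_iff_map_prod_eq_prod_map_map hW.aemeasurable
      hY.aemeasurable).1 hindep
  haveI : IsProbabilityMeasure (μ.map W) := Measure.isProbabilityMeasure_map hW.aemeasurable
  haveI : IsProbabilityMeasure (μ.map Y) := Measure.isProbabilityMeasure_map hY.aemeasurable
  have hid : Integrable (id : F → F) (μ.map Y) := by
    rw [integrable_map_measure aestronglyMeasurable_id hY.aemeasurable]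
    exact hYint
  have h0' : (∫ y, y ∂(μ.map Y)) = 0 := by
    have := integral_map (φ := Y) hY.aemeasurable
      (aestronglyMeasurable_id (μ := μ.map Y))
    simp only [id_eq] at this
    rw [this]; exact hY0
  have hbd' : ∀ᵐ y ∂(μ.map Y), ‖y‖ ≤ R := by
    rw [ae_map_iff hY.aemeasurable
      ((isClosed_le continuous_norm continuous_const).measurableSet)]
    exact hYbd
  have hWbd' : ∀ᵐ w ∂(μ.map W), ‖w‖ ≤ B := by
    rw [ae_map_iff hW.aemeasurable
      ((isClosed_le continuous_norm continuous_const).measurableSet)]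
    exact hWbd
  have hcont : Continuous (fun p : F × F => Real.cosh (lam * ‖p.1 + p.2‖)) := by fun_prop
  have hmeasS : MeasurableSet {p : F × F | ‖p.1 + p.2‖ ≤ B + R} :=
    (isClosed_le (by fun_prop) continuous_const).measurableSet
  have haeprod : ∀ᵐ p ∂((μ.map W).prod (μ.map Y)), ‖p.1 + p.2‖ ≤ B + R := by
    rw [← hmap, ae_map_iff hWY hmeasS]
    filter_upwards [hYbd, hWbd] with θ h1 h2
    exact (norm_add_le _ _).trans (by gcongr)
  have hprod_int : Integrable (fun p : F × F => Real.cosh (lam * ‖p.1 + p.2‖))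
      ((μ.map W).prod (μ.map Y)) := by
    refine Integrable.mono' (integrable_const (Real.cosh (lam * (B + R))))
      hcont.aestronglyMeasurable ?_
    filter_upwards [haeprod] with p hp
    rw [Real.norm_eq_abs, abs_of_nonneg (Real.cosh_pos _).le, Real.cosh_le_cosh,
      abs_of_nonneg (by positivity), abs_of_nonneg (by positivity)]
    gcongr
  have key : ∫ θ, Real.cosh (lam * ‖W θ + Y θ‖) ∂μ
      = ∫ w, ∫ y, Real.cosh (lam * ‖w + y‖) ∂(μ.map Y) ∂(μ.map W) := by
    rw [← integral_prod _ hprod_int, ← hmap,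
      integral_map hWY hcont.aestronglyMeasurable]
  rw [key]
  have hW_cosh_int : Integrable (fun w => Real.cosh (lam * ‖w‖)) (μ.map W) := by
    refine Integrable.mono' (integrable_const (Real.cosh (lam * B)))
      (Continuous.aestronglyMeasurable (by fun_prop)) ?_
    filter_upwards [hWbd'] with w hw
    rw [Real.norm_eq_abs, abs_of_nonneg (Real.cosh_pos _).le, Real.cosh_le_cosh,
      abs_of_nonneg (by positivity), abs_of_nonneg (by positivity)]
    gcongr
  calc ∫ w, ∫ y, Real.cosh (lam * ‖w + y‖) ∂(μ.map Y) ∂(μ.map W)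
      ≤ ∫ w, Real.cosh (lam * ‖w‖) * Real.cosh (lam * R) ∂(μ.map W) := by
        refine integral_mono (hprod_int.integral_prod_left) (hW_cosh_int.mul_const _) ?_
        intro w
        exact aux_step (μ.map Y) hR hlam hid h0' hbd' w
    _ = (∫ w, Real.cosh (lam * ‖w‖) ∂(μ.map W)) * Real.cosh (lam * R) := by
        rw [integral_mul_const]
    _ = (∫ θ, Real.cosh (lam * ‖W θ‖) ∂μ) * Real.cosh (lam * R) := by
        rw [integral_map hW.aemeasurable (Continuous.aestronglyMeasurable (by fun_prop))]

section
variable {F : Type*} [NormedAddCommGroup F] [InnerProductSpace ℝ F] [CompleteSpace F]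
  [SecondCountableTopology F] [MeasurableSpace F] [BorelSpace F]


theorem iid_hilbert_concentration'
    {Θ : Type*} [MeasurableSpace Θ] (μ : Measure Θ) [IsProbabilityMeasure μ]
    (n : ℕ) (hn : 1 ≤ n) (X : Fin n → Θ → F)
    (hmeas : ∀ i, Measurable (X i))
    (hint : ∀ i, Integrable (X i) μ)
    (hindep : ProbabilityTheory.iIndepFun X μ)
    (R δ : ℝ) (hR : 0 < R) (hδ : 0 < δ)
    (hbd : ∀ i, ∀ᵐ θ ∂μ, ‖X i θ - ∫ θ', X i θ' ∂μ‖ ≤ R) :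
    μ {θ | δ ≤ (n : ℝ)⁻¹ * ‖∑ i, (X i θ - ∫ θ', X i θ' ∂μ)‖} ≤
      ENNReal.ofReal (2 * Real.exp (-((n : ℝ) * δ ^ 2) / (2 * R ^ 2))) := by
  set Y : Fin n → Θ → F := fun i θ => X i θ - ∫ θ', X i θ' ∂μ with hY
  have hYmeas : ∀ i, Measurable (Y i) := fun i => (hmeas i).sub measurable_const
  have hYint : ∀ i, Integrable (Y i) μ := fun i => (hint i).sub (integrable_const _)
  have hY0 : ∀ i, (∫ θ, Y i θ ∂μ) = 0 := by
    intro i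
    rw [hY]
    rw [integral_sub (hint i) (integrable_const _), integral_const]
    simp
  have hYindep : ProbabilityTheory.iIndepFun Y μ := by
    have := hindep.comp (fun i => fun v => v - ∫ θ', X i θ' ∂μ)
      (fun i => measurable_id.sub measurable_const)
    exact this
  set lam : ℝ := δ / R ^ 2 with hlam_def
  have hlam : 0 < lam := by positivity
  -- main moment bound by induction on finsets
  have main : ∀ s : Finset (Fin n),
      ∫ θ, Real.cosh (lam * ‖∑ i ∈ s, Y i θ‖) ∂μ ≤ Real.cosh (lam * R) ^ s.card := by
    intro s
    induction s using Finset.induction_on with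
    | empty => simp
    | @insert a s ha ih =>
      have hWmeas : Measurable (fun θ => ∑ i ∈ s, Y i θ) := by
        exact Finset.measurable_sum s (fun i _ => hYmeas i)
      have hindepWY : ProbabilityTheory.IndepFun (fun θ => ∑ i ∈ s, Y i θ) (Y a) μ := by
        have := hYindep.indepFun_finset_sum_of_notMem hYmeas ha
        have hfun : (∑ j ∈ s, Y j) = fun θ => ∑ i ∈ s, Y i θ := by
          funext θ; simp [Finset.sum_apply]
        rwa [hfun] at this
      have hWbd : ∀ᵐ θ ∂μ, ‖∑ i ∈ s, Y i θ‖ ≤ s.card * R := by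
        have hall : ∀ᵐ θ ∂μ, ∀ i, ‖Y i θ‖ ≤ R := ae_all_iff.2 hbd
        filter_upwards [hall] with θ hθ
        calc ‖∑ i ∈ s, Y i θ‖ ≤ ∑ i ∈ s, ‖Y i θ‖ := norm_sum_le _ _
          _ ≤ ∑ _i ∈ s, R := Finset.sum_le_sum (fun i _ => hθ i)
          _ = s.card * R := by rw [Finset.sum_const, nsmul_eq_mul]
      have step := aux_step_rv μ hWmeas (hYmeas a) hindepWY hR
        (by positivity : (0:ℝ) ≤ s.card * R) hlam.le (hYint a) (hY0 a) (hbd a) hWbd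
      have hins : ∀ θ, ∑ i ∈ insert a s, Y i θ = (∑ i ∈ s, Y i θ) + Y a θ := by
        intro θ; rw [Finset.sum_insert ha]; abel
      calc ∫ θ, Real.cosh (lam * ‖∑ i ∈ insert a s, Y i θ‖) ∂μ
          = ∫ θ, Real.cosh (lam * ‖(∑ i ∈ s, Y i θ) + Y a θ‖) ∂μ := by
            congr 1; funext θ; rw [hins θ]
        _ ≤ (∫ θ, Real.cosh (lam * ‖∑ i ∈ s, Y i θ‖) ∂μ) * Real.cosh (lam * R) := step
        _ ≤ Real.cosh (lam * R) ^ s.card * Real.cosh (lam * R) :=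
            mul_le_mul_of_nonneg_right ih (Real.cosh_pos _).le
        _ = Real.cosh (lam * R) ^ (insert a s).card := by
            rw [Finset.card_insert_of_notMem ha, pow_succ]
  have hS := main Finset.univ
  rw [Finset.card_univ, Fintype.card_fin] at hS
  set S : Θ → ℝ := fun θ => ‖∑ i, Y i θ‖ with hSdef
  -- integrability of cosh (lam * S)
  have hSmeas : Measurable S :=
    (Finset.measurable_sum Finset.univ (fun i _ => hYmeas i)).norm
  have hSbd : ∀ᵐ θ ∂μ, S θ ≤ n * R := by
    have hall : ∀ᵐ θ ∂μ, ∀ i, ‖Y i θ‖ ≤ R := ae_all_iff.2 hbd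
    filter_upwards [hall] with θ hθ
    calc S θ ≤ ∑ i, ‖Y i θ‖ := norm_sum_le _ _
      _ ≤ ∑ _i : Fin n, R := Finset.sum_le_sum (fun i _ => hθ i)
      _ = n * R := by rw [Finset.sum_const, nsmul_eq_mul, Finset.card_univ, Fintype.card_fin]
  have hint_cosh : Integrable (fun θ => Real.cosh (lam * S θ)) μ := by
    refine Integrable.mono' (integrable_const (Real.cosh (lam * (n * R))))
      ((Real.continuous_cosh.measurable.comp ((measurable_const.mul hSmeas)))).aestronglyMeasurable ?_
    filter_upwards [hSbd] with θ hθ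
    have h0S : (0:ℝ) ≤ S θ := norm_nonneg _
    rw [Real.norm_eq_abs, abs_of_nonneg (Real.cosh_pos _).le, Real.cosh_le_cosh,
      abs_of_nonneg (mul_nonneg hlam.le h0S), abs_of_nonneg (by positivity)]
    exact mul_le_mul_of_nonneg_left hθ hlam.le
  -- Markov
  set ε : ℝ := Real.cosh (lam * (n * δ)) with hεdef
  have hεpos : 0 < ε := Real.cosh_pos _
  have hnpos : (0:ℝ) < n := by exact_mod_cast hn
  have hsub : {θ | δ ≤ (n : ℝ)⁻¹ * ‖∑ i, (X i θ - ∫ θ', X i θ' ∂μ)‖}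
      ⊆ {θ | ε ≤ Real.cosh (lam * S θ)} := by
    intro θ hθ
    simp only [Set.mem_setOf_eq] at hθ ⊢
    have h1 : (n:ℝ) * δ ≤ S θ := by
      have h2 := mul_le_mul_of_nonneg_left hθ hnpos.le
      rw [← mul_assoc, mul_inv_cancel₀ hnpos.ne', one_mul] at h2
      exact h2
    rw [hεdef, Real.cosh_le_cosh, abs_of_nonneg (by positivity),
      abs_of_nonneg (mul_nonneg hlam.le (norm_nonneg _))]
    exact mul_le_mul_of_nonneg_left h1 hlam.le
  have markov := mul_meas_ge_le_integral_of_nonneg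
    (Filter.Eventually.of_forall (fun θ => (Real.cosh_pos _).le) :
      0 ≤ᵐ[μ] fun θ => Real.cosh (lam * S θ)) hint_cosh ε
  have hmono : (μ {θ | δ ≤ (n : ℝ)⁻¹ * ‖∑ i, (X i θ - ∫ θ', X i θ' ∂μ)‖}).toReal
      ≤ (μ {θ | ε ≤ Real.cosh (lam * S θ)}).toReal := by
    apply ENNReal.toReal_mono (measure_ne_top μ _)
    exact measure_mono hsub
  -- numeric endgame
  set a : ℝ := (n : ℝ) * δ ^ 2 / (2 * R ^ 2) with hadef
  have hE : ∫ θ, Real.cosh (lam * S θ) ∂μ ≤ Real.exp a := by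
    refine hS.trans ?_
    calc Real.cosh (lam * R) ^ n ≤ Real.exp ((lam * R) ^ 2 / 2) ^ n :=
          pow_le_pow_left₀ (Real.cosh_pos _).le (Real.cosh_le_exp_half_sq _) n
      _ = Real.exp (n * ((lam * R) ^ 2 / 2)) := by
          rw [← Real.exp_nat_mul]
      _ = Real.exp a := by
          congr 1
          rw [hadef, hlam_def]
          field_simp
  have hεlb : Real.exp (2 * a) ≤ 2 * ε := by
    rw [hεdef, Real.cosh_eq]
    have h1 : lam * ((n:ℝ) * δ) = 2 * a := by
      rw [hadef, hlam_def]; field_simp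
    rw [← h1]
    have := Real.exp_pos (-(lam * ((n:ℝ) * δ)))
    linarith
  have htoReal : (μ {θ | ε ≤ Real.cosh (lam * S θ)}).toReal
      ≤ 2 * Real.exp (-((n : ℝ) * δ ^ 2) / (2 * R ^ 2)) := by
    rw [show -((n : ℝ) * δ ^ 2) / (2 * R ^ 2) = -a by rw [hadef]; ring]
    have h2 : ε * (μ {θ | ε ≤ Real.cosh (lam * S θ)}).toReal ≤ Real.exp a :=
      markov.trans hE
    have h3 : Real.exp a = Real.exp (-a) * Real.exp (2 * a) := by
      rw [← Real.exp_add]; ring_nf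
    nlinarith [Real.exp_pos (-a), ENNReal.toReal_nonneg
      (a := μ {θ | ε ≤ Real.cosh (lam * S θ)}), Real.exp_pos (2*a)]
  calc μ {θ | δ ≤ (n : ℝ)⁻¹ * ‖∑ i, (X i θ - ∫ θ', X i θ' ∂μ)‖}
      = ENNReal.ofReal ((μ {θ | δ ≤ (n : ℝ)⁻¹ * ‖∑ i, (X i θ - ∫ θ', X i θ' ∂μ)‖}).toReal) :=
        (ENNReal.ofReal_toReal (measure_ne_top μ _)).symm
    _ ≤ ENNReal.ofReal (2 * Real.exp (-((n : ℝ) * δ ^ 2) / (2 * R ^ 2))) :=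
        ENNReal.ofReal_le_ofReal (hmono.trans htoReal)
end
end
end AuxProof

/-- **concentration for i.i.d. sums in a separable Hilbert space.**
If `X_1, …, X_n` are i.i.d. random variables in a separable Hilbert space with
`|X_i − E[X_i]| ≤ R` almost surely, then for any `δ > 0`,
`P((1/n) |Σ_i (X_i − E[X_i])| ≥ δ) ≤ 2 exp(−n δ²/(2R²))`. -/
theorem iid_hilbert_concentration
    {Θ : Type*} [MeasurableSpace Θ] (μ : Measure Θ) [IsProbabilityMeasure μ]
    {F : Type*} [NormedAddCommGroup F] [InnerProductSpace ℝ F] [CompleteSpace F]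
    [TopologicalSpace.SeparableSpace F] [MeasurableSpace F] [BorelSpace F]
    (n : ℕ) (hn : 1 ≤ n) (X : Fin n → Θ → F)
    (hmeas : ∀ i, Measurable (X i))
    (hint : ∀ i, Integrable (X i) μ)
    (hindep : ProbabilityTheory.iIndepFun X μ)
    (hid : ∀ i j, ProbabilityTheory.IdentDistrib (X i) (X j) μ μ)
    (R δ : ℝ) (hR : 0 < R) (hδ : 0 < δ)
    (hbd : ∀ i, ∀ᵐ θ ∂μ, ‖X i θ - ∫ θ', X i θ' ∂μ‖ ≤ R) :
    μ {θ | δ ≤ (n : ℝ)⁻¹ * ‖∑ i, (X i θ - ∫ θ', X i θ' ∂μ)‖} ≤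
      ENNReal.ofReal (2 * Real.exp (-((n : ℝ) * δ ^ 2) / (2 * R ^ 2))) := by
  haveI : SecondCountableTopology F := UniformSpace.secondCountable_of_separable F
  exact iid_hilbert_concentration' μ n hn X hmeas hint hindep R δ hR hδ hbd
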